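/- arXiv:0905.3346 — 3 statements merged into one kernel-verified Lean document; each statement's English description precedes it below -/
import Mathlib

section
/- Let n be a positive integer with n ≡ 0 (mod 4), let p be a prime with p ≡ 3 (mod 8), and suppose N = p − n² is positive and prime. Then the equation x⁴ + 2n·x²y² − N·y⁴ = z² has no solution in positive integers x, y, z. -/
lemma int_pow4_emod (a m : ℤ) : a^4 % m = (a % m)^4 % m := by
  obtain ⟨q, hq⟩ : ∃ q, a = m * q + a % m := ⟨a / m, (Int.mul_ediv_add_emod a m).symm⟩
  have key : a^4 = (a % m)^4 + m * (q * (a^3 + a^2 * (a%m) + a * (a%m)^2 + (a%m)^3)) := by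
    linear_combination (a^3 + a^2 * (a%m) + a * (a%m)^2 + (a%m)^3) * hq
  rw [key, Int.add_mul_emod_self_left]

lemma int_sq_emod (a m : ℤ) : a^2 % m = (a % m)^2 % m := by
  obtain ⟨q, hq⟩ : ∃ q, a = m * q + a % m := ⟨a / m, (Int.mul_ediv_add_emod a m).symm⟩
  have key : a^2 = (a % m)^2 + m * (q * (a + a % m)) := by
    linear_combination (a + a % m) * hq
  rw [key, Int.add_mul_emod_self_left]

lemma sqmod16 (a : ℤ) : a^2 % 16 = 0 ∨ a^2 % 16 = 1 ∨ a^2 % 16 = 4 ∨ a^2 % 16 = 9 := by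
  have h : a^2 % 16 = (a % 16)^2 % 16 := int_sq_emod a 16
  have h0 : 0 ≤ a % 16 := Int.emod_nonneg a (by norm_num)
  have h1 : a % 16 < 16 := Int.emod_lt_of_pos a (by norm_num)
  set r := a % 16 with hr
  interval_cases r <;> norm_num at h <;> omega

lemma pow4mod16 (a : ℤ) : (a % 2 = 1 ∧ a^4 % 16 = 1) ∨ (a % 2 = 0 ∧ a^4 % 16 = 0) := by
  have h : a^4 % 16 = (a % 16)^4 % 16 := int_pow4_emod a 16
  have h0 : 0 ≤ a % 16 := Int.emod_nonneg a (by norm_num)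
  have h1 : a % 16 < 16 := Int.emod_lt_of_pos a (by norm_num)
  have h2 : a % 16 % 2 = a % 2 := by omega
  set r := a % 16 with hr
  interval_cases r <;> norm_num at h h2 <;> omega

lemma sqmod8 (a : ℤ) : a^2 % 8 = 0 ∨ a^2 % 8 = 1 ∨ a^2 % 8 = 4 := by
  have h : a^2 % 8 = (a % 8)^2 % 8 := int_sq_emod a 8
  have h0 : 0 ≤ a % 8 := Int.emod_nonneg a (by norm_num)
  have h1 : a % 8 < 8 := Int.emod_lt_of_pos a (by norm_num)
  set r := a % 8 with hr
  interval_cases r <;> norm_num at h <;> omega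

lemma pow4mod8 (a : ℤ) : (a % 2 = 1 ∧ a^4 % 8 = 1) ∨ (a % 2 = 0 ∧ a^4 % 8 = 0) := by
  rcases pow4mod16 a with ⟨h1, h2⟩ | ⟨h1, h2⟩ <;> [left; right] <;> exact ⟨h1, by omega⟩

-- L1 : y must be even
lemma L1 {n N x y z : ℤ} (hn4 : n % 4 = 0) (hN8 : N % 8 = 3) (hy : y % 2 = 1)
    (heq : x ^ 4 + 2 * n * x ^ 2 * y ^ 2 - N * y ^ 4 = z ^ 2) : False := by
  obtain ⟨m, hm⟩ : ∃ m, n = 4 * m := ⟨n / 4, by omega⟩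
  have hy4 : y^4 % 16 = 1 := by rcases pow4mod16 y with ⟨_, h⟩ | ⟨h, _⟩ <;> omega
  obtain ⟨Y, hY⟩ : ∃ Y, y^4 = 16 * Y + 1 := ⟨y^4 / 16, by omega⟩
  have hx4 : x^4 % 16 = 0 ∨ x^4 % 16 = 1 := by
    rcases pow4mod16 x with ⟨_, h⟩ | ⟨_, h⟩ <;> omega
  have hz := sqmod16 z
  have heq' : x^4 + 8 * (m * x^2 * y^2) - (16 * (N * Y) + N) = z^2 := by
    linear_combination heq + N * hY - (2 * x^2 * y^2) * hm
  omega

-- L2 : case p d^4 + 4 c^4 impossible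
lemma L2 {n p x c d : ℤ} (hn4 : n % 4 = 0) (hp8 : p % 8 = 3) (hd : d % 2 = 1)
    (heq : x ^ 2 + 4 * n * (c ^ 2 * d ^ 2) = p * d ^ 4 + 4 * c ^ 4) : False := by
  obtain ⟨m, hm⟩ : ∃ m, n = 4 * m := ⟨n / 4, by omega⟩
  have hd4 : d^4 % 16 = 1 := by rcases pow4mod16 d with ⟨_, h⟩ | ⟨h, _⟩ <;> omega
  obtain ⟨D, hD⟩ : ∃ D, d^4 = 16 * D + 1 := ⟨d^4 / 16, by omega⟩
  have hc4 : c^4 % 16 = 0 ∨ c^4 % 16 = 1 := by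
    rcases pow4mod16 c with ⟨_, h⟩ | ⟨_, h⟩ <;> omega
  have hx := sqmod16 x
  have heq' : x^2 + 16 * (m * (c^2 * d^2)) = 16 * (p * D) + p + 4 * c^4 := by
    linear_combination heq + p * hD - (4 * (c^2 * d^2)) * hm
  omega

-- L3 : the bad sign case impossible mod 8
lemma L3 {n N f g d : ℤ} (hn4 : n % 4 = 0) (hN8 : N % 8 = 3) (hfg : f % 2 = 1 ∨ g % 2 = 1)
    (heq : d ^ 2 = N * g ^ 4 - f ^ 4 + 2 * n * (f ^ 2 * g ^ 2)) : False := by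
  obtain ⟨m, hm⟩ : ∃ m, n = 4 * m := ⟨n / 4, by omega⟩
  have hd := sqmod8 d
  have hf4 : (f % 2 = 1 ∧ f^4 % 8 = 1) ∨ (f % 2 = 0 ∧ f^4 % 8 = 0) := pow4mod8 f
  rcases pow4mod8 g with ⟨hg1, hg2⟩ | ⟨hg1, hg2⟩
  · obtain ⟨G, hG⟩ : ∃ G, g^4 = 8 * G + 1 := ⟨g^4 / 8, by omega⟩
    have heq' : d^2 = 8 * (N * G) + N - f^4 + 8 * (m * (f^2 * g^2)) := by
      linear_combination heq + N * hG + (2 * (f^2 * g^2)) * hm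
    omega
  · obtain ⟨G, hG⟩ : ∃ G, g^4 = 8 * G := ⟨g^4 / 8, by omega⟩
    have heq' : d^2 = 8 * (N * G) - f^4 + 8 * (m * (f^2 * g^2)) := by
      linear_combination heq + N * hG + (2 * (f^2 * g^2)) * hm
    omega

lemma coprime_of_no_common_prime {a b : ℤ} (h : ∀ q : ℤ, Prime q → q ∣ a → q ∣ b → False) :
    IsCoprime a b := by
  rw [Int.isCoprime_iff_gcd_eq_one]
  by_contra hg
  obtain ⟨q, hq, hdvd⟩ := Nat.exists_prime_and_dvd hg
  exact h _ (Nat.prime_iff_prime_int.mp hq)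
    (dvd_trans (Int.natCast_dvd_natCast.mpr hdvd) (Int.gcd_dvd_left _ _))
    (dvd_trans (Int.natCast_dvd_natCast.mpr hdvd) (Int.gcd_dvd_right _ _))

lemma abs_pow4 (d : ℤ) : |d| ^ 4 = d ^ 4 := by
  rw [pow_abs]; exact abs_of_nonneg (by positivity)

lemma quartic_split {a b c : ℤ} (ha : 0 < a) (hb : 0 < b) (hco : IsCoprime a b)
    (h : a * b = c ^ 4) : ∃ d e : ℤ, 0 < d ∧ 0 < e ∧ a = d ^ 4 ∧ b = e ^ 4 ∧ d^2 * e^2 = c^2 := by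
  obtain ⟨d, hd⟩ := exists_associated_pow_of_mul_eq_pow' hco h
  obtain ⟨e, he⟩ := exists_associated_pow_of_mul_eq_pow' hco.symm (by rw [mul_comm]; exact h)
  rw [Int.associated_iff] at hd he
  have hd4 : a = |d| ^ 4 := by
    rw [abs_pow4]
    rcases hd with hd | hd
    · exact hd.symm
    · nlinarith [sq_nonneg (d^2)]
  have he4 : b = |e| ^ 4 := by
    rw [abs_pow4]
    rcases he with he | he
    · exact he.symm
    · nlinarith [sq_nonneg (e^2)]
  refine ⟨|d|, |e|, ?_, ?_, hd4, he4, ?_⟩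
  · rcases (abs_nonneg d).lt_or_eq with h' | h'
    · exact h'
    · exfalso; rw [← h'] at hd4; simp at hd4; omega
  · rcases (abs_nonneg e).lt_or_eq with h' | h'
    · exact h'
    · exfalso; rw [← h'] at he4; simp at he4; omega
  · rw [hd4, he4] at h
    have h1 : (|d|^2 * |e|^2)^2 = (c^2)^2 := by linear_combination h
    have h2 : 0 ≤ |d|^2 * |e|^2 := by positivity
    have h3 : 0 ≤ c^2 := sq_nonneg c
    nlinarith [h1, h2, h3]

lemma dvd_two_emod {q A : ℤ} (hq : Prime q) (h2 : q ∣ 2) (hA : q ∣ A) : A % 2 = 0 := by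
  have h := Int.prime_iff_natAbs_prime.mp hq
  have h2' : q.natAbs ∣ 2 := by
    have := Int.natAbs_dvd_natAbs.mpr h2; simpa using this
  have hq2 : q.natAbs = 2 := (Nat.prime_dvd_prime_iff_eq h Nat.prime_two).mp h2'
  have hdvd : ((q.natAbs : ℤ)) ∣ A := (Int.natAbs_dvd).mpr hA
  rw [hq2] at hdvd
  omega

lemma stage1 {p y₁ s w : ℤ} (hp : Prime p) (hs0 : 0 < s) (hw0 : 0 < w)
    (hcop : IsCoprime s w) (hs2 : s % 2 = 1)
    (hprod : s * w = 4 * p * y₁ ^ 4) :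
    ∃ c d : ℤ, 0 < c ∧ 0 < d ∧ d % 2 = 1 ∧ IsCoprime c d ∧ c ^ 2 * d ^ 2 = y₁ ^ 2 ∧
      (s + w = p * d ^ 4 + 4 * c ^ 4 ∨ s + w = d ^ 4 + 4 * p * c ^ 4) := by
  have h2s : ¬ (2:ℤ) ∣ s := by rintro ⟨t, ht⟩; omega
  have h2w : (2:ℤ) ∣ w := by
    have hd : (2:ℤ) ∣ s * w := ⟨2 * p * y₁ ^ 4, by linear_combination hprod⟩
    exact (Int.prime_two.dvd_mul.mp hd).resolve_left h2s
  obtain ⟨w1, rfl⟩ := h2w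
  have hsw1 : s * w1 = 2 * (p * y₁ ^ 4) :=
    mul_left_cancel₀ (by norm_num : (2:ℤ) ≠ 0) (by linear_combination hprod)
  have h2w1 : (2:ℤ) ∣ w1 := by
    have hd : (2:ℤ) ∣ s * w1 := ⟨p * y₁ ^ 4, hsw1⟩
    exact (Int.prime_two.dvd_mul.mp hd).resolve_left h2s
  obtain ⟨w0, rfl⟩ := h2w1
  have hsw0 : s * w0 = p * y₁ ^ 4 :=
    mul_left_cancel₀ (by norm_num : (2:ℤ) ≠ 0) (by linear_combination hsw1)
  have hw00 : 0 < w0 := by linarith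
  have hppos : 0 < p := by nlinarith [mul_pos hs0 hw00, hsw0, sq_nonneg (y₁^2)]
  have hpdvd : p ∣ s * w0 := ⟨y₁ ^ 4, hsw0⟩
  rcases (hp.dvd_mul).mp hpdvd with hps | hpw
  · -- p ∣ s : sum = p d^4 + 4 c^4
    obtain ⟨s1, rfl⟩ := hps
    have hs10 : 0 < s1 := by nlinarith
    have hs1w0 : s1 * w0 = y₁ ^ 4 :=
      mul_left_cancel₀ hp.ne_zero (by linear_combination hsw0)
    have hcop1 : IsCoprime s1 w0 :=
      (hcop.of_isCoprime_of_dvd_left ⟨p, mul_comm p s1⟩).of_isCoprime_of_dvd_right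
        ⟨4, by ring⟩
    obtain ⟨d, c, hd0, hc0, hdeq, hceq, hcd⟩ := quartic_split hs10 hw00 hcop1 hs1w0
    have hd2 : d % 2 = 1 := by
      rcases Int.emod_two_eq d with h | h
      · exfalso
        obtain ⟨t, ht⟩ : ∃ t, d = 2 * t := ⟨d / 2, by omega⟩
        obtain ⟨X, hX⟩ : ∃ X, p * s1 = 2 * X := ⟨8 * p * t ^ 4, by rw [hdeq, ht]; ring⟩
        omega
      · exact h
    refine ⟨c, d, hc0, hd0, hd2, ?_, by linear_combination hcd, Or.inl (by rw [hdeq, hceq]; ring)⟩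
    refine coprime_of_no_common_prime fun q hq hqc hqd => ?_
    have h1 : q ∣ p * s1 := hqd.trans ⟨p * d ^ 3, by rw [hdeq]; ring⟩
    have h2 : q ∣ 2 * (2 * w0) := hqc.trans ⟨4 * c ^ 3, by rw [hceq]; ring⟩
    exact hq.not_unit (hcop.isUnit_of_dvd' h1 h2)
  · -- p ∣ w0 : sum = d^4 + 4 p c^4
    obtain ⟨w2, rfl⟩ := hpw
    have hw20 : 0 < w2 := by nlinarith
    have hsw2 : s * w2 = y₁ ^ 4 :=
      mul_left_cancel₀ hp.ne_zero (by linear_combination hsw0)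
    have hcop1 : IsCoprime s w2 :=
      hcop.of_isCoprime_of_dvd_right ⟨4 * p, by ring⟩
    obtain ⟨d, c, hd0, hc0, hdeq, hceq, hcd⟩ := quartic_split hs0 hw20 hcop1 hsw2
    have hd2 : d % 2 = 1 := by
      rcases Int.emod_two_eq d with h | h
      · exfalso
        obtain ⟨t, ht⟩ : ∃ t, d = 2 * t := ⟨d / 2, by omega⟩
        obtain ⟨X, hX⟩ : ∃ X, s = 2 * X := ⟨8 * t ^ 4, by rw [hdeq, ht]; ring⟩
        omega
      · exact h
    refine ⟨c, d, hc0, hd0, hd2, ?_, by linear_combination hcd, Or.inr (by rw [hdeq, hceq]; ring)⟩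
    refine coprime_of_no_common_prime fun q hq hqc hqd => ?_
    have h1 : q ∣ s := hqd.trans ⟨d ^ 3, by rw [hdeq]; ring⟩
    have h2 : q ∣ 2 * (2 * (p * w2)) := hqc.trans ⟨4 * p * c ^ 3, by rw [hceq]; ring⟩
    exact hq.not_unit (hcop.isUnit_of_dvd' h1 h2)

set_option maxHeartbeats 1000000 in
theorem stmt2 (n p N : ℤ) (hn : 0 < n) (hn4 : n % 4 = 0)
    (hp : Prime p) (hp8 : p % 8 = 3)
    (hN : N = p - n ^ 2) (hNpos : 0 < N) (hNprime : Prime N) :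
    ¬ ∃ x y z : ℤ, 0 < x ∧ 0 < y ∧ 0 < z ∧
      x ^ 4 + 2 * n * x ^ 2 * y ^ 2 - N * y ^ 4 = z ^ 2 := by
  rintro ⟨x, y, z, hx, hy, hz, heq⟩
  obtain ⟨m, hm⟩ : ∃ m, n = 4 * m := ⟨n / 4, by omega⟩
  have hNK : N = p - 8 * (2 * m ^ 2) := by rw [hN, hm]; ring
  have hN8 : N % 8 = 3 := by omega
  have hppos : 0 < p := by have h1 : 0 ≤ n ^ 2 := sq_nonneg n; linarith [hNpos, hN.ge, hN.le]
  have H : ∀ k : ℕ, ∀ x y z : ℤ, y ≤ (k : ℤ) → 0 < x → 0 < y → 0 < z →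
      x ^ 4 + 2 * n * x ^ 2 * y ^ 2 - N * y ^ 4 = z ^ 2 → False := by
    intro k
    induction k with
    | zero => intro x y z hk hx hy hz heq; omega
    | succ k ih =>
      intro x y z hk hx hy hz heq
      by_cases hg : Int.gcd x y = 1
      · -- coprime case
        have hcop : IsCoprime x y := Int.isCoprime_iff_gcd_eq_one.mpr hg
        have hy2 : y % 2 = 0 := by
          rcases Int.emod_two_eq y with h | h
          · exact h
          · exact (L1 hn4 hN8 h heq).elim
        have hx2 : x % 2 = 1 := by
          rcases Int.emod_two_eq x with h | h
          · exact absurd (hcop.isUnit_of_dvd' ⟨x / 2, by omega⟩ ⟨y / 2, by omega⟩)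
              Int.prime_two.not_unit
          · exact h
        obtain ⟨y₁, hy₁⟩ : ∃ t, y = 2 * t := ⟨y / 2, by omega⟩
        have hy₁0 : 0 < y₁ := by omega
        obtain ⟨A, hA⟩ : ∃ A : ℤ, A = x ^ 2 + n * y ^ 2 := ⟨_, rfl⟩
        have hApos : 0 < A := by
          have h1 : 0 < x ^ 2 := by positivity
          have h2 : 0 ≤ n * y ^ 2 := mul_nonneg hn.le (sq_nonneg y)
          rw [hA]; linarith
        have hkey : A ^ 2 - z ^ 2 = p * y ^ 4 := by
          rw [hA]; linear_combination heq + y ^ 4 * hN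
        have hpy4 : 0 < p * y ^ 4 := mul_pos hppos (by positivity)
        have hzA : z < A := by
          by_contra hcon
          push_neg at hcon
          have h1 : A ^ 2 ≤ z ^ 2 := pow_le_pow_left₀ hApos.le hcon 2
          linarith [hkey, hpy4]
        have hA2 : A % 2 = 1 := by
          obtain ⟨t, ht⟩ : ∃ t, x = 2 * t + 1 := ⟨x / 2, by omega⟩
          obtain ⟨X, hX⟩ : ∃ X, A = 2 * X + 1 :=
            ⟨2 * t ^ 2 + 2 * t + 8 * m * y₁ ^ 2, by rw [hA, ht, hm, hy₁]; ring⟩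
          omega
        have hz2 : z % 2 = 1 := by
          rcases Int.emod_two_eq z with h | h
          · exfalso
            obtain ⟨t, ht⟩ : ∃ t, z = 2 * t := ⟨z / 2, by omega⟩
            obtain ⟨B, hB⟩ : ∃ B, A = 2 * B + 1 := ⟨A / 2, by omega⟩
            obtain ⟨Y4, hY4⟩ : ∃ Y4, p * y ^ 4 = 2 * Y4 := ⟨8 * p * y₁ ^ 4, by rw [hy₁]; ring⟩
            have hodd : (2:ℤ) * (2 * B ^ 2 + 2 * B - 2 * t ^ 2) + 1 = 2 * Y4 := by
              rw [← hY4, ← hkey, hB, ht]; ring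
            omega
          · exact h
        obtain ⟨u, hu⟩ : ∃ u, A - z = 2 * u := ⟨(A - z) / 2, by omega⟩
        obtain ⟨v, hv⟩ : ∃ v, A + z = 2 * v := ⟨(A + z) / 2, by omega⟩
        have hu0 : 0 < u := by omega
        have hv0 : 0 < v := by omega
        have hprod : u * v = 4 * p * y₁ ^ 4 := by
          have h4 : (4:ℤ) * (u * v) = 4 * (4 * p * y₁ ^ 4) := by
            linear_combination hkey - (A + z) * hu - (2 * u) * hv +
              p * (y ^ 3 + 2 * y ^ 2 * y₁ + 4 * y * y₁ ^ 2 + 8 * y₁ ^ 3) * hy₁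
          exact mul_left_cancel₀ (by norm_num) h4
        have hAuv : A = u + v := by omega
        have hzuv : z = v - u := by omega
        have hcopuv : IsCoprime u v := by
          refine coprime_of_no_common_prime fun q hq hqu hqv => ?_
          have hqA : q ∣ A := by rw [hAuv]; exact dvd_add hqu hqv
          have hqz : q ∣ z := by rw [hzuv]; exact dvd_sub hqv hqu
          have hq4 : q ∣ 4 * p * y₁ ^ 4 := by rw [← hprod]; exact hqu.mul_right v
          rcases hq.dvd_mul.mp hq4 with h1 | h2
          · rcases hq.dvd_mul.mp h1 with h3 | h4
            · have hq2' : q ∣ 2 := hq.dvd_of_dvd_pow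
                (show q ∣ (2:ℤ) ^ 2 by rw [show ((2:ℤ) ^ 2) = 4 by norm_num]; exact h3)
              have := dvd_two_emod hq hq2' hqA
              omega
            · have hassoc := hq.associated_of_dvd hp h4
              have hpu : p ∣ u := hassoc.symm.dvd.trans hqu
              have hpv : p ∣ v := hassoc.symm.dvd.trans hqv
              have hpA : p ∣ A := by rw [hAuv]; exact dvd_add hpu hpv
              have hpz : p ∣ z := by rw [hzuv]; exact dvd_sub hpv hpu
              obtain ⟨A1, hA1⟩ := hpA
              obtain ⟨z1, hz1'⟩ := hpz
              have h5 : p * (p * (A1 ^ 2 - z1 ^ 2)) = p * y ^ 4 := by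
                linear_combination hkey - (A + p * A1) * hA1 + (z + p * z1) * hz1'
              have h6 : p * (A1 ^ 2 - z1 ^ 2) = y ^ 4 := mul_left_cancel₀ hp.ne_zero h5
              have hpy : p ∣ y := hp.dvd_of_dvd_pow (n := 4) ⟨A1 ^ 2 - z1 ^ 2, h6.symm⟩
              have hpx : p ∣ x := by
                refine hp.dvd_of_dvd_pow (n := 2) ?_
                have hxx : x ^ 2 = A - n * y ^ 2 := by rw [hA]; ring
                rw [hxx]
                exact dvd_sub ⟨A1, hA1⟩ ((dvd_pow hpy two_ne_zero).mul_left n)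
              exact hp.not_unit (hcop.isUnit_of_dvd' hpx hpy)
          · have hqy₁ : q ∣ y₁ := hq.dvd_of_dvd_pow h2
            have hqy : q ∣ y := by rw [hy₁]; exact hqy₁.mul_left 2
            have hqx : q ∣ x := by
              refine hq.dvd_of_dvd_pow (n := 2) ?_
              have hxx : x ^ 2 = A - n * y ^ 2 := by rw [hA]; ring
              rw [hxx]
              exact dvd_sub hqA ((dvd_pow hqy two_ne_zero).mul_left n)
            exact hq.not_unit (hcop.isUnit_of_dvd' hqx hqy)
        have hstage : ∃ c d : ℤ, 0 < c ∧ 0 < d ∧ d % 2 = 1 ∧ IsCoprime c d ∧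
            c ^ 2 * d ^ 2 = y₁ ^ 2 ∧ (A = p * d ^ 4 + 4 * c ^ 4 ∨ A = d ^ 4 + 4 * p * c ^ 4) := by
          rcases Int.emod_two_eq u with h | h
          · obtain ⟨c, d, h1, h2, h3, h4, h5, h6⟩ :=
              stage1 (y₁ := y₁) (s := v) (w := u) hp hv0 hu0 hcopuv.symm (by omega) (by linear_combination hprod)
            exact ⟨c, d, h1, h2, h3, h4, h5, by rw [hAuv, add_comm u v]; exact h6⟩
          · obtain ⟨c, d, h1, h2, h3, h4, h5, h6⟩ := stage1 hp hu0 hv0 hcopuv h hprod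
            exact ⟨c, d, h1, h2, h3, h4, h5, by rw [hAuv]; exact h6⟩
        obtain ⟨c, d, hc0, hd0, hd2, hcopcd, hcd, hsum⟩ := hstage
        rcases hsum with hsum | hsum
        · -- case A = p d^4 + 4 c^4 : contradiction mod 16
          have heq2 : x ^ 2 + 4 * n * (c ^ 2 * d ^ 2) = p * d ^ 4 + 4 * c ^ 4 := by
            linear_combination hsum - hA + 4 * n * hcd - n * (y + 2 * y₁) * hy₁
          exact L2 hn4 hp8 hd2 heq2
        · -- case A = d^4 + 4 p c^4 : second descent
          obtain ⟨e, he⟩ : ∃ e : ℤ, e = d ^ 2 - 2 * n * c ^ 2 := ⟨_, rfl⟩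
          have hx2eq : x ^ 2 = e ^ 2 + 4 * N * c ^ 4 := by
            linear_combination hsum - hA - 4 * c ^ 4 * hN -
              (e + d ^ 2 - 2 * n * c ^ 2) * he + 4 * n * hcd - n * (y + 2 * y₁) * hy₁
          have he2 : e % 2 = 1 := by
            obtain ⟨t, ht⟩ : ∃ t, d = 2 * t + 1 := ⟨d / 2, by omega⟩
            obtain ⟨X, hX⟩ : ∃ X, e = 2 * X + 1 :=
              ⟨2 * t ^ 2 + 2 * t - n * c ^ 2, by rw [he, ht]; ring⟩
            omega
          have hNc4 : 0 < N * c ^ 4 := mul_pos hNpos (by positivity)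
          have hsq : e ^ 2 < x ^ 2 := by linarith [hx2eq, hNc4]
          have hex1 : e < x := by
            by_contra hcon
            push_neg at hcon
            have h1 : x ^ 2 ≤ e ^ 2 := pow_le_pow_left₀ hx.le hcon 2
            linarith
          have hex2 : -x < e := by
            by_contra hcon
            push_neg at hcon
            have h0 : x ≤ -e := by linarith
            have h1 : x ^ 2 ≤ (-e) ^ 2 := pow_le_pow_left₀ hx.le h0 2
            have h2 : (-e) ^ 2 = e ^ 2 := by ring
            linarith
          obtain ⟨u', hu'⟩ : ∃ t, x - e = 2 * t := ⟨(x - e) / 2, by omega⟩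
          obtain ⟨v', hv'⟩ : ∃ t, x + e = 2 * t := ⟨(x + e) / 2, by omega⟩
          have hu'0 : 0 < u' := by omega
          have hv'0 : 0 < v' := by omega
          have hprod' : u' * v' = N * c ^ 4 := by
            have h4 : (4:ℤ) * (u' * v') = 4 * (N * c ^ 4) := by
              linear_combination hx2eq - (x + e) * hu' - (2 * u') * hv'
            exact mul_left_cancel₀ (by norm_num) h4
          have hxuv : x = u' + v' := by omega
          have hevu : e = v' - u' := by omega
          have hcopu'v' : IsCoprime u' v' := by
            refine coprime_of_no_common_prime fun q hq hqu hqv => ?_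
            have hqx : q ∣ x := by rw [hxuv]; exact dvd_add hqu hqv
            have hqe : q ∣ e := by rw [hevu]; exact dvd_sub hqv hqu
            have hqprod : q ∣ N * c ^ 4 := by rw [← hprod']; exact hqu.mul_right v'
            have hdd : d ^ 2 = e + (2 * n) * c ^ 2 := by rw [he]; ring
            rcases hq.dvd_mul.mp hqprod with h1 | h2
            · have hassoc := hq.associated_of_dvd hNprime h1
              have hNx : N ∣ x := hassoc.symm.dvd.trans hqx
              have hNe : N ∣ e := hassoc.symm.dvd.trans hqe
              obtain ⟨x1, hx1'⟩ := hNx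
              obtain ⟨e1, he1'⟩ := hNe
              have h5 : N * (N * (x1 ^ 2 - e1 ^ 2)) = N * (4 * c ^ 4) := by
                linear_combination hx2eq - (x + N * x1) * hx1' + (e + N * e1) * he1'
              have h6 : N ∣ 4 * c ^ 4 :=
                ⟨x1 ^ 2 - e1 ^ 2, (mul_left_cancel₀ hNprime.ne_zero h5).symm⟩
              rcases hNprime.dvd_mul.mp h6 with h7 | h8
              · have hN2 : N ∣ 2 := hNprime.dvd_of_dvd_pow
                  (show N ∣ (2:ℤ) ^ 2 by rw [show ((2:ℤ) ^ 2) = 4 by norm_num]; exact h7)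
                have := dvd_two_emod hNprime hN2 (dvd_refl N)
                omega
              · have hNc : N ∣ c := hNprime.dvd_of_dvd_pow h8
                have hNd : N ∣ d := by
                  refine hNprime.dvd_of_dvd_pow (n := 2) ?_
                  rw [hdd]
                  exact dvd_add ⟨e1, he1'⟩ ((dvd_pow hNc two_ne_zero).mul_left (2 * n))
                exact hNprime.not_unit (hcopcd.isUnit_of_dvd' hNc hNd)
            · have hqc : q ∣ c := hq.dvd_of_dvd_pow h2
              have hqd : q ∣ d := by
                refine hq.dvd_of_dvd_pow (n := 2) ?_
                rw [hdd]
                exact dvd_add hqe ((dvd_pow hqc two_ne_zero).mul_left (2 * n))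
              exact hq.not_unit (hcopcd.isUnit_of_dvd' hqc hqd)
          have hNdvd : N ∣ u' * v' := ⟨c ^ 4, hprod'⟩
          rcases hNprime.dvd_mul.mp hNdvd with hNu | hNv
          · -- descent case
            obtain ⟨u1, rfl⟩ := hNu
            have hu10 : 0 < u1 := by
              by_contra hcon
              push_neg at hcon
              have h1 : N * u1 ≤ 0 := mul_nonpos_of_nonneg_of_nonpos hNpos.le hcon
              linarith
            have hprod1 : u1 * v' = c ^ 4 :=
              mul_left_cancel₀ hNprime.ne_zero (by linear_combination hprod')
            have hcop1 : IsCoprime u1 v' :=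
              hcopu'v'.of_isCoprime_of_dvd_left ⟨N, mul_comm N u1⟩
            obtain ⟨f, g, hf0, hg0, hfeq, hgeq, hfg⟩ := quartic_split hu10 hv'0 hcop1 hprod1
            have heqd : g ^ 4 + 2 * n * g ^ 2 * f ^ 2 - N * f ^ 4 = d ^ 2 := by
              linear_combination he - hevu - hgeq + N * hfeq + 2 * n * hfg
            have hfc : f ≤ y₁ := by
              have hgg : (1:ℤ) ≤ g ^ 2 := by
                have := pow_le_pow_left₀ (by norm_num : (0:ℤ) ≤ 1) hg0 2
                simpa using this
              have hddg : (1:ℤ) ≤ d ^ 2 := by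
                have := pow_le_pow_left₀ (by norm_num : (0:ℤ) ≤ 1) hd0 2
                simpa using this
              have h1 : f ^ 2 ≤ c ^ 2 := by
                calc f ^ 2 = f ^ 2 * 1 := by ring
                  _ ≤ f ^ 2 * g ^ 2 := mul_le_mul_of_nonneg_left hgg (sq_nonneg f)
                  _ = c ^ 2 := hfg
              have h2 : c ^ 2 ≤ y₁ ^ 2 := by
                calc c ^ 2 = c ^ 2 * 1 := by ring
                  _ ≤ c ^ 2 * d ^ 2 := mul_le_mul_of_nonneg_left hddg (sq_nonneg c)
                  _ = y₁ ^ 2 := hcd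
              by_contra hcon
              push_neg at hcon
              have h3 := pow_lt_pow_left₀ hcon hy₁0.le (by norm_num : 2 ≠ 0)
              linarith
            exact ih g f d (by omega) hg0 hf0 hd0 heqd
          · -- final contradiction mod 8
            obtain ⟨v1, rfl⟩ := hNv
            have hv10 : 0 < v1 := by
              by_contra hcon
              push_neg at hcon
              have h1 : N * v1 ≤ 0 := mul_nonpos_of_nonneg_of_nonpos hNpos.le hcon
              linarith
            have hprod1 : u' * v1 = c ^ 4 :=
              mul_left_cancel₀ hNprime.ne_zero (by linear_combination hprod')
            have hcop1 : IsCoprime u' v1 :=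
              hcopu'v'.of_isCoprime_of_dvd_right ⟨N, mul_comm N v1⟩
            obtain ⟨f, g, hf0, hg0, hfeq, hgeq, hfg⟩ := quartic_split hu'0 hv10 hcop1 hprod1
            have heqd : d ^ 2 = N * g ^ 4 - f ^ 4 + 2 * n * (f ^ 2 * g ^ 2) := by
              linear_combination -he + hevu + N * hgeq - hfeq - 2 * n * hfg
            have hfgpar : f % 2 = 1 ∨ g % 2 = 1 := by
              by_contra hcon
              push_neg at hcon
              have h2f : (2:ℤ) ∣ f := ⟨f / 2, by omega⟩
              have h2g : (2:ℤ) ∣ g := ⟨g / 2, by omega⟩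
              have hdu : (2:ℤ) ∣ u' := by
                rw [hfeq]; exact dvd_pow h2f (by norm_num)
              have hdv : (2:ℤ) ∣ N * v1 := by
                rw [hgeq]; exact (dvd_pow h2g (by norm_num)).mul_left N
              exact Int.prime_two.not_unit (hcopu'v'.isUnit_of_dvd' hdu hdv)
            exact L3 hn4 hN8 hfgpar heqd
      · -- non-coprime: divide out a common prime and recurse
        obtain ⟨q, hq, hdvd⟩ := Nat.exists_prime_and_dvd hg
        have hqx : (q:ℤ) ∣ x := (Int.natCast_dvd_natCast.mpr hdvd).trans (Int.gcd_dvd_left _ _)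
        have hqy : (q:ℤ) ∣ y := (Int.natCast_dvd_natCast.mpr hdvd).trans (Int.gcd_dvd_right _ _)
        obtain ⟨x1, rfl⟩ := hqx
        obtain ⟨y1, rfl⟩ := hqy
        have hq0 : (0:ℤ) < q := by exact_mod_cast hq.pos
        have hq2 : (2:ℤ) ≤ q := by exact_mod_cast hq.two_le
        have hx1 : 0 < x1 := by
          by_contra h
          push_neg at h
          have h1 : (q:ℤ) * x1 ≤ 0 := mul_nonpos_of_nonneg_of_nonpos hq0.le h
          linarith
        have hy1 : 0 < y1 := by
          by_contra h
          push_neg at h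
          have h1 : (q:ℤ) * y1 ≤ 0 := mul_nonpos_of_nonneg_of_nonpos hq0.le h
          linarith
        have hdz : ((q:ℤ) ^ 2) ^ 2 ∣ z ^ 2 :=
          ⟨x1 ^ 4 + 2 * n * x1 ^ 2 * y1 ^ 2 - N * y1 ^ 4, by linear_combination (-1 : ℤ) * heq⟩
        have hq2z : (q:ℤ) ^ 2 ∣ z := (Int.pow_dvd_pow_iff two_ne_zero).mp hdz
        obtain ⟨z1, rfl⟩ := hq2z
        have hz1 : 0 < z1 := by
          by_contra h
          push_neg at h
          have h1 : (q:ℤ) ^ 2 * z1 ≤ 0 := mul_nonpos_of_nonneg_of_nonpos (pow_pos hq0 2).le h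
          linarith
        have heq1 : x1 ^ 4 + 2 * n * x1 ^ 2 * y1 ^ 2 - N * y1 ^ 4 = z1 ^ 2 :=
          mul_left_cancel₀ (pow_ne_zero 4 (ne_of_gt hq0)) (by linear_combination heq)
        have hbound : y1 ≤ (k:ℤ) := by
          have hkk : (q:ℤ) * y1 ≤ (k:ℤ) + 1 := by exact_mod_cast hk
          have h2 : 2 * y1 ≤ (q:ℤ) * y1 := mul_le_mul_of_nonneg_right hq2 hy1.le
          linarith
        exact ih x1 y1 z1 hbound hx1 hy1 hz1 heq1
  exact H y.toNat x y z (by omega) hx hy hz heq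
end

section
/- The diophantine equation x⁴ + 8x²y² + 13y⁴ = z² has no solution in positive integers x, y, z. -/
private lemma pow4_split (m n v : ℕ) (h : Nat.Coprime m n) (e : m * n = v ^ 4) :
    ∃ a b, m = a ^ 4 ∧ n = b ^ 4 ∧ a * b = v ∧ Nat.Coprime a b := by
  obtain ⟨a, ha⟩ := exists_eq_pow_of_mul_eq_pow (α := ℕ)
    (by rw [Nat.isUnit_iff]; exact h) e
  obtain ⟨b, hb⟩ := exists_eq_pow_of_mul_eq_pow (α := ℕ) (a := n) (b := m)
    (by rw [Nat.isUnit_iff]; exact h.symm) (by rwa [mul_comm] at e)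
  refine ⟨a, b, ha, hb, ?_, ?_⟩
  · have : (a * b) ^ 4 = v ^ 4 := by rw [mul_pow, ← ha, ← hb, e]
    exact Nat.pow_left_injective (by norm_num) this
  · exact Nat.Coprime.coprime_dvd_left (ha ▸ dvd_pow_self a (by norm_num))
      (Nat.Coprime.coprime_dvd_right (hb ▸ dvd_pow_self b (by norm_num)) h)

private lemma B1 : ∀ k l c : ZMod 16,
    (2*k+1)^4 + 8*(2*k+1)^2*(2*l+1)^2 + 13*(2*l+1)^4 ≠ c^2 := by decide

private lemma B2 : ∀ k l c : ZMod 16,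
    (2*k)^4 + 8*(2*k)^2*(2*l+1)^2 + 13*(2*l+1)^4 ≠ c^2 := by decide

private lemma B3 : ∀ a b m : ZMod 16, 3*a^4 + 4*b^4 ≠ (2*m+1)^2 := by decide

private lemma B4a : ∀ a b m : ZMod 16, (2*a)^4 + 12*b^4 ≠ (2*m+1)^2 := by decide

private lemma B4b : ∀ a b m : ZMod 16,
    (2*a+1)^4 + 12*(2*b+1)^4 ≠ (2*m+1)^2 := by decide

private lemma B5 : ∀ a e f : ZMod 8, (2*a+1)^2 + 13*e^4 + f^4 ≠ 8*e^2*f^2 := by decide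

private lemma zmod16_zero : (16 : ZMod 16) = 0 := by decide

private lemma pos_of_mul (e f b : ℕ) (hef : e * f = b) (hb : 0 < b) : 0 < e ∧ 0 < f := by
  have h : e * f ≠ 0 := by rw [hef]; omega
  rw [Nat.mul_ne_zero_iff] at h
  exact ⟨Nat.pos_of_ne_zero h.1, Nat.pos_of_ne_zero h.2⟩

private lemma odd_sq (n : ℕ) (h : Odd (n ^ 2)) : Odd n := by
  rcases Nat.even_or_odd n with he | ho
  · exfalso
    obtain ⟨r, rfl⟩ := he
    obtain ⟨c, hc⟩ := h
    have h2 : 4 * r ^ 2 = 2 * c + 1 := by rw [← hc]; ring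
    omega
  · exact ho

/-- Layer 2 core: given the split of `p*q = 13*b^4` with `13 ∣ p`. -/
private lemma stepC (a b v U p q : ℕ) (hv : 0 < v) (hb : 0 < b)
    (hbv : b ∣ v) (haodd : Odd a) (ha : 0 < a)
    (hpq : p * q = 13 * b ^ 4) (hcopq : Nat.Coprime p q)
    (hU : U = p + q) (h13 : 13 ∣ p)
    (haU : a ^ 2 = 8 * b ^ 2 + U ∨ 8 * b ^ 2 = a ^ 2 + U) :
    ∃ X Y Z : ℕ, 0 < X ∧ 0 < Y ∧ 0 < Z ∧ Y ≤ v ∧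
      X ^ 4 + 8 * X ^ 2 * Y ^ 2 + 13 * Y ^ 4 = Z ^ 2 := by
  obtain ⟨p₁, rfl⟩ := h13
  have hpq' : p₁ * q = b ^ 4 := by
    have h13' : 13 * (p₁ * q) = 13 * b ^ 4 := by rw [← hpq]; ring
    exact Nat.eq_of_mul_eq_mul_left (by norm_num) h13'
  have hco' : Nat.Coprime p₁ q :=
    Nat.Coprime.coprime_dvd_left (dvd_mul_left p₁ 13) hcopq
  obtain ⟨e, f, he, hf, hef, hcoef⟩ := pow4_split p₁ q b hco' hpq'
  subst he hf hU
  obtain ⟨hepos, hfpos⟩ := pos_of_mul e f b hef hb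
  have hbv' : b ≤ v := Nat.le_of_dvd hv hbv
  subst hef
  rcases haU with h | h
  · -- a^2 = 8 (e f)^2 + (13 e^4 + f^4) : new solution (f, e, a)
    refine ⟨f, e, a, hfpos, hepos, ha, ?_, ?_⟩
    · calc e ≤ e * f := Nat.le_mul_of_pos_right e hfpos
        _ ≤ v := hbv'
    · rw [h]; ring
  · -- impossible mod 8
    exfalso
    obtain ⟨k, hk⟩ := haodd
    rw [hk] at h
    have hcast := congrArg (Nat.cast : ℕ → ZMod 8) h
    push_cast at hcast
    exact B5 k e f (by linear_combination -hcast)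

/-- Layer 2 : from the form `a^4 + 12 b^4 = x^2 + 16 v^2` with `a b = v`. -/
private lemma stepB (x v a b : ℕ) (hx : Odd x) (hv : 0 < v)
    (hab : a * b = v) (hcoab : Nat.Coprime a b)
    (hsum : a ^ 4 + 12 * b ^ 4 = x ^ 2 + 16 * v ^ 2) :
    ∃ X Y Z : ℕ, 0 < X ∧ 0 < Y ∧ 0 < Z ∧ Y ≤ v ∧
      X ^ 4 + 8 * X ^ 2 * Y ^ 2 + 13 * Y ^ 4 = Z ^ 2 := by
  obtain ⟨hapos, hbpos⟩ := pos_of_mul a b v hab hv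
  obtain ⟨m, hm⟩ := hx
  have hxodd : Odd x := ⟨m, hm⟩
  -- a is odd
  have haodd : Odd a := by
    rcases Nat.even_or_odd a with hae | hao
    · exfalso
      obtain ⟨k, hk⟩ := hae
      have hc := congrArg (Nat.cast : ℕ → ZMod 16) hsum
      rw [hk, hm] at hc
      push_cast at hc
      rw [zmod16_zero] at hc
      exact B4a k b m (by linear_combination hc)
    · exact hao
  -- b is even
  have hbeven : Even b := by
    rcases Nat.even_or_odd b with hbe | hbo
    · exact hbe
    · exfalso
      obtain ⟨k, hk⟩ := haodd
      obtain ⟨l, hl⟩ := hbo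
      have hc := congrArg (Nat.cast : ℕ → ZMod 16) hsum
      rw [hk, hl, hm] at hc
      push_cast at hc
      rw [zmod16_zero] at hc
      exact B4b k l m (by linear_combination hc)
  -- the quantity U = |a^2 - 8 b^2|
  have hsum' : a ^ 4 + 12 * b ^ 4 = x ^ 2 + 16 * a ^ 2 * b ^ 2 := by
    rw [hsum, ← hab]; ring
  obtain ⟨U, haU⟩ : ∃ U, a ^ 2 = 8 * b ^ 2 + U ∨ 8 * b ^ 2 = a ^ 2 + U := by
    rcases le_or_gt (8 * b ^ 2) (a ^ 2) with h | h
    · exact ⟨a ^ 2 - 8 * b ^ 2, Or.inl (by omega)⟩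
    · exact ⟨8 * b ^ 2 - a ^ 2, Or.inr (by omega)⟩
  have hU2 : U ^ 2 = x ^ 2 + 52 * b ^ 4 := by
    rcases haU with h | h
    · have e1 : a ^ 4 = 64 * b ^ 4 + 16 * (b ^ 2 * U) + U ^ 2 := by
        rw [show a ^ 4 = (a ^ 2) ^ 2 by ring, h]; ring
      have e2 : a ^ 2 * b ^ 2 = 8 * b ^ 4 + b ^ 2 * U := by rw [h]; ring
      linarith [hsum', e1, e2]
    · have e1 : (8 * b ^ 2) ^ 2 = (a ^ 2 + U) ^ 2 := by rw [h]
      have e2 : 8 * b ^ 2 * b ^ 2 = (a ^ 2 + U) * b ^ 2 := by rw [h]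
      have e3 : 8 * b ^ 2 * U = (a ^ 2 + U) * U := by rw [h]
      nlinarith [hsum', e1, e2, e3]
  have hUodd : Odd U :=
    odd_sq U (by rw [hU2]; exact hxodd.pow.add_even ⟨26 * b ^ 4, by ring⟩)
  have hxU : x < U := by
    have h1 : x ^ 2 < U ^ 2 := by
      have h2 : 0 < b ^ 4 := pow_pos hbpos 4
      omega
    exact lt_of_pow_lt_pow_left₀ 2 (Nat.zero_le U) h1
  obtain ⟨p, hp, hppos⟩ : ∃ p, U = x + 2 * p ∧ 0 < p := by
    have h1 := Nat.odd_iff.mp hUodd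
    have h2 := Nat.odd_iff.mp hxodd
    refine ⟨(U - x) / 2, by omega, by omega⟩
  have hpq : p * (p + x) = 13 * b ^ 4 := by
    have h := hU2
    rw [hp] at h
    have hexp : x ^ 2 + 4 * (p * (p + x)) = x ^ 2 + 52 * b ^ 4 := by rw [← h]; ring
    omega
  -- coprimality of p and p + x
  have hcopq : Nat.Coprime p (p + x) := by
    by_contra hnc
    obtain ⟨r, hrp, hr1, hr2⟩ := Nat.Prime.not_coprime_iff_dvd.mp hnc
    have hrU : r ∣ U := by rw [hp, show x + 2 * p = p + (p + x) by ring]; exact dvd_add hr1 hr2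
    have hrx : r ∣ x := by
      have := Nat.dvd_sub hr2 hr1
      rwa [Nat.add_sub_cancel_left] at this
    have hrodd : r ≠ 2 := by
      rintro rfl
      rw [Nat.odd_iff] at hUodd
      omega
    have hr2dvd : r ^ 2 ∣ 13 * b ^ 4 := by
      rw [← hpq, sq]
      exact mul_dvd_mul hr1 hr2
    have hrb : r ∣ b := by
      rcases eq_or_ne r 13 with h13 | h13
      · subst h13
        obtain ⟨k, hk⟩ := hr2dvd
        have h13b : 13 * b ^ 4 = 13 * (13 * k) := by rw [hk]; ring
        have : b ^ 4 = 13 * k := Nat.eq_of_mul_eq_mul_left (by norm_num) h13b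
        exact hrp.dvd_of_dvd_pow (this ▸ Dvd.intro k rfl)
      · have : r ∣ 13 * b ^ 4 := dvd_trans (dvd_pow_self r two_ne_zero) hr2dvd
        rcases (Nat.Prime.dvd_mul hrp).mp this with h | h
        · exact absurd ((Nat.prime_dvd_prime_iff_eq hrp (by norm_num)).mp h) h13
        · exact hrp.dvd_of_dvd_pow h
    have hra : r ∣ a := by
      have hr8 : r ∣ 8 * b ^ 2 := Dvd.dvd.mul_left (hrb.pow two_ne_zero) 8
      have hra2 : r ∣ a ^ 2 := by
        rcases haU with h | h
        · rw [h]; exact dvd_add hr8 hrU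
        · have := Nat.dvd_sub hr8 hrU
          rwa [show 8 * b ^ 2 - U = a ^ 2 by omega] at this
      exact hrp.dvd_of_dvd_pow hra2
    have : r ∣ Nat.gcd a b := Nat.dvd_gcd hra hrb
    rw [hcoab] at this
    exact absurd (Nat.le_of_dvd one_pos this) (by have := hrp.two_le; omega)
  have hU' : U = p + (p + x) := by omega
  have h13 : 13 ∣ p * (p + x) := by rw [hpq]; exact Dvd.intro (b ^ 4) rfl
  have hbv : b ∣ v := Dvd.intro_left a hab
  rcases (Nat.Prime.dvd_mul (by norm_num)).mp h13 with h | h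
  · exact stepC a b v U p (p + x) hv hbpos hbv haodd hapos hpq hcopq hU' h haU
  · exact stepC a b v U (p + x) p hv hbpos hbv haodd hapos
      (by rw [mul_comm]; exact hpq) hcopq.symm (by omega) h haU

/-- Layer 1 : from the coprime splitting of `s * t = 12 v^4` with `3 ∣ s`. -/
private lemma stepA (x v s t : ℕ) (hx : Odd x) (hv : 0 < v)
    (hco : Nat.Coprime s t)
    (hsum : s + t = x ^ 2 + 16 * v ^ 2) (hprod : s * t = 12 * v ^ 4)
    (h3 : 3 ∣ s) (h4 : 4 ∣ s ∨ 4 ∣ t) :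
    ∃ X Y Z : ℕ, 0 < X ∧ 0 < Y ∧ 0 < Z ∧ Y ≤ v ∧
      X ^ 4 + 8 * X ^ 2 * Y ^ 2 + 13 * Y ^ 4 = Z ^ 2 := by
  rcases h4 with h4 | h4
  · -- 12 ∣ s : form 12 b^4 + a^4
    have h12 : 12 ∣ s := by
      have := Nat.Coprime.mul_dvd_of_dvd_of_dvd (by norm_num : Nat.Coprime 3 4) h3 h4
      norm_num at this
      exact this
    obtain ⟨s₁, rfl⟩ := h12
    have hprod' : s₁ * t = v ^ 4 := by
      have h' : 12 * (s₁ * t) = 12 * v ^ 4 := by rw [← hprod]; ring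
      exact Nat.eq_of_mul_eq_mul_left (by norm_num) h'
    have hco' : Nat.Coprime s₁ t :=
      Nat.Coprime.coprime_dvd_left (dvd_mul_left s₁ 12) hco
    obtain ⟨b, a, hb, ha, hba, hcoba⟩ := pow4_split s₁ t v hco' hprod'
    subst hb ha
    exact stepB x v a b hx hv (by rw [mul_comm]; exact hba) hcoba.symm
      (by rw [← hsum]; ring)
  · -- s = 3 a^4, t = 4 b^4 : impossible mod 16
    exfalso
    obtain ⟨s₁, rfl⟩ := h3
    obtain ⟨t₁, rfl⟩ := h4
    have hprod' : s₁ * t₁ = v ^ 4 := by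
      have h' : 12 * (s₁ * t₁) = 12 * v ^ 4 := by rw [← hprod]; ring
      exact Nat.eq_of_mul_eq_mul_left (by norm_num) h'
    have hco' : Nat.Coprime s₁ t₁ :=
      Nat.Coprime.coprime_dvd_left (dvd_mul_left s₁ 3)
        (Nat.Coprime.coprime_dvd_right (dvd_mul_left t₁ 4) hco)
    obtain ⟨a, b, ha, hb, hab, hcoab⟩ := pow4_split s₁ t₁ v hco' hprod'
    subst ha hb
    obtain ⟨m, hm⟩ := hx
    have hc := congrArg (Nat.cast : ℕ → ZMod 16) hsum
    rw [hm] at hc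
    push_cast at hc
    rw [zmod16_zero] at hc
    exact B3 a b m (by linear_combination hc)

private lemma main : ∀ y x z : ℕ, 0 < x → 0 < y → 0 < z →
    x ^ 4 + 8 * x ^ 2 * y ^ 2 + 13 * y ^ 4 ≠ z ^ 2 := by
  intro y
  induction y using Nat.strong_induction_on with
  | _ y IH =>
  intro x z hx hy hz heq
  rcases Nat.lt_or_ge 1 (Nat.gcd x y) with hd | hd
  · -- common factor : descend
    obtain ⟨X, hX⟩ := Nat.gcd_dvd_left x y
    obtain ⟨Y, hY⟩ := Nat.gcd_dvd_right x y
    set d := Nat.gcd x y with hdef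
    have hd4 : (d ^ 2) ^ 2 ∣ z ^ 2 := by
      rw [← heq, hX, hY]
      exact ⟨X ^ 4 + 8 * X ^ 2 * Y ^ 2 + 13 * Y ^ 4, by ring⟩
    obtain ⟨Z, hZ⟩ := (Nat.pow_dvd_pow_iff two_ne_zero).mp hd4
    have hXp : 0 < X := by rcases Nat.eq_zero_or_pos X with h | h; · rw [h, mul_zero] at hX; omega
                           exact h
    have hYp : 0 < Y := by rcases Nat.eq_zero_or_pos Y with h | h; · rw [h, mul_zero] at hY; omega
                           exact h
    have hZp : 0 < Z := by rcases Nat.eq_zero_or_pos Z with h | h; · rw [h, mul_zero] at hZ; omega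
                           exact h
    have hYlt : Y < y := by
      calc Y < 2 * Y := by omega
        _ ≤ d * Y := Nat.mul_le_mul_right Y hd
        _ = y := hY.symm
    apply IH Y hYlt X Z hXp hYp hZp
    have h' : d ^ 4 * (X ^ 4 + 8 * X ^ 2 * Y ^ 2 + 13 * Y ^ 4) = d ^ 4 * Z ^ 2 := by
      calc d ^ 4 * (X ^ 4 + 8 * X ^ 2 * Y ^ 2 + 13 * Y ^ 4)
          = (d * X) ^ 4 + 8 * (d * X) ^ 2 * (d * Y) ^ 2 + 13 * (d * Y) ^ 4 := by ring
        _ = z ^ 2 := by rw [← hX, ← hY, heq]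
        _ = d ^ 4 * Z ^ 2 := by rw [hZ]; ring
    exact Nat.eq_of_mul_eq_mul_left (by positivity) h'
  · have hco : Nat.Coprime x y := by
      have := Nat.gcd_pos_of_pos_left y hx
      unfold Nat.Coprime
      omega
    rcases Nat.even_or_odd x with hxe | hxo
    · rcases Nat.even_or_odd y with hye | hyo
      · -- both even : contradicts coprimality
        have h2 : 2 ∣ Nat.gcd x y :=
          Nat.dvd_gcd hxe.two_dvd hye.two_dvd
        rw [hco] at h2
        omega
      · -- x even, y odd : mod 16
        obtain ⟨k, hk⟩ := hxe
        obtain ⟨l, hl⟩ := hyo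
        have hc := congrArg (Nat.cast : ℕ → ZMod 16) heq
        rw [hk, hl] at hc
        push_cast at hc
        exact B2 k l z (by linear_combination hc)
    · rcases Nat.even_or_odd y with hye | hyo
      swap
      · -- both odd : mod 16
        obtain ⟨k, hk⟩ := hxo
        obtain ⟨l, hl⟩ := hyo
        have hc := congrArg (Nat.cast : ℕ → ZMod 16) heq
        rw [hk, hl] at hc
        push_cast at hc
        exact B1 k l z (by linear_combination hc)
      · -- x odd, y even : the main case
        obtain ⟨v, rfl⟩ : ∃ v, y = 2 * v := ⟨y / 2, by
          have := Nat.even_iff.mp hye; omega⟩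
        have hvpos : 0 < v := by omega
        -- z is odd
        have hzo : Odd z := by
          refine odd_sq z ?_
          rw [← heq]
          exact (hxo.pow.add_even ⟨4 * x ^ 2 * (2 * v) ^ 2, by ring⟩).add_even
            ⟨104 * v ^ 4, by ring⟩
        set w := x ^ 2 + 16 * v ^ 2 with hwdef
        have hw2 : w ^ 2 = z ^ 2 + 48 * v ^ 4 := by rw [hwdef, ← heq]; ring
        have hwodd : Odd w := hxo.pow.add_even ⟨8 * v ^ 2, by ring⟩
        have hzw : z < w := by
          have h1 : z ^ 2 < w ^ 2 := by
            have h2 : 0 < v ^ 4 := pow_pos hvpos 4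
            omega
          exact lt_of_pow_lt_pow_left₀ 2 (Nat.zero_le w) h1
        obtain ⟨s, hs, hspos⟩ : ∃ s, w = z + 2 * s ∧ 0 < s := by
          have h1 := Nat.odd_iff.mp hwodd
          have h2 := Nat.odd_iff.mp hzo
          exact ⟨(w - z) / 2, by omega, by omega⟩
        have hst : s * (s + z) = 12 * v ^ 4 := by
          have h := hw2
          rw [hs] at h
          have hexp : z ^ 2 + 4 * (s * (s + z)) = z ^ 2 + 48 * v ^ 4 := by rw [← h]; ring
          omega
        have hsum : s + (s + z) = x ^ 2 + 16 * v ^ 2 := by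
          rw [← hwdef]; omega
        -- s and s + z are coprime
        have hco' : Nat.Coprime s (s + z) := by
          by_contra hnc
          obtain ⟨r, hrp, hr1, hr2⟩ := Nat.Prime.not_coprime_iff_dvd.mp hnc
          have hrw : r ∣ w := by rw [show w = s + (s + z) by omega]; exact dvd_add hr1 hr2
          have hrz : r ∣ z := by
            have := Nat.dvd_sub hr2 hr1
            rwa [Nat.add_sub_cancel_left] at this
          have hrne2 : r ≠ 2 := by
            rintro rfl
            rw [Nat.odd_iff] at hwodd
            omega
          have hr2dvd : r ^ 2 ∣ 12 * v ^ 4 := by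
            rw [← hst, sq]
            exact mul_dvd_mul hr1 hr2
          have hr3dvd : r ^ 2 ∣ 3 * v ^ 4 := by
            have hcop : Nat.Coprime (r ^ 2) 4 := by
              refine Nat.Coprime.pow_left 2 ?_
              refine (Nat.Prime.coprime_iff_not_dvd hrp).mpr fun hdvd => ?_
              have := hrp.dvd_of_dvd_pow (show r ∣ 2 ^ 2 by norm_num at hdvd ⊢; exact hdvd)
              have := Nat.le_of_dvd two_pos this
              have := hrp.two_le
              omega
            refine hcop.dvd_of_dvd_mul_right ?_
            rw [show 3 * v ^ 4 * 4 = 12 * v ^ 4 by ring]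
            exact hr2dvd
          have hrv : r ∣ v := by
            rcases eq_or_ne r 3 with h3 | h3
            · subst h3
              obtain ⟨k, hk⟩ := hr3dvd
              have h3v : 3 * v ^ 4 = 3 * (3 * k) := by rw [hk]; ring
              have : v ^ 4 = 3 * k := Nat.eq_of_mul_eq_mul_left (by norm_num) h3v
              exact hrp.dvd_of_dvd_pow (this ▸ Dvd.intro k rfl)
            · have : r ∣ 3 * v ^ 4 := dvd_trans (dvd_pow_self r two_ne_zero) hr3dvd
              rcases (Nat.Prime.dvd_mul hrp).mp this with h | h
              · exact absurd ((Nat.prime_dvd_prime_iff_eq hrp (by norm_num)).mp h) h3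
              · exact hrp.dvd_of_dvd_pow h
          have hrx : r ∣ x := by
            have h16 : r ∣ 16 * v ^ 2 := Dvd.dvd.mul_left (hrv.pow two_ne_zero) 16
            have hx2 : r ∣ x ^ 2 := by
              have := Nat.dvd_sub hrw h16
              rwa [hwdef, Nat.add_sub_cancel] at this
            exact hrp.dvd_of_dvd_pow hx2
          have hry : r ∣ 2 * v := Dvd.dvd.mul_left hrv 2
          have : r ∣ Nat.gcd x (2 * v) := Nat.dvd_gcd hrx hry
          rw [hco] at this
          exact absurd (Nat.le_of_dvd one_pos this) (by have := hrp.two_le; omega)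
        -- 3 divides s or s + z
        have h3 : 3 ∣ s ∨ 3 ∣ (s + z) := by
          refine (Nat.Prime.dvd_mul (by norm_num)).mp ?_
          rw [hst]
          exact ⟨4 * v ^ 4, by ring⟩
        -- 4 divides s or s + z
        have h4 : 4 ∣ s ∨ 4 ∣ (s + z) := by
          have h4' : 4 ∣ s * (s + z) := by rw [hst]; exact ⟨3 * v ^ 4, by ring⟩
          have hodd : Odd (s + (s + z)) := by rw [show s + (s + z) = w by omega]; exact hwodd
          rw [Nat.odd_iff] at hodd
          rcases Nat.even_or_odd s with hse | hso
          · left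
            have hto : Odd (s + z) := by rw [Nat.even_iff] at hse; rw [Nat.odd_iff]; omega
            have hcop : Nat.Coprime 4 (s + z) := by
              have h2 : Nat.Coprime 2 (s + z) :=
                (Nat.prime_two.coprime_iff_not_dvd).mpr
                  (by rw [Nat.odd_iff] at hto; omega)
              exact Nat.Coprime.pow_left 2 h2
            exact hcop.dvd_of_dvd_mul_right h4'
          · right
            have hcop : Nat.Coprime 4 s := by
              have h2 : Nat.Coprime 2 s :=
                (Nat.prime_two.coprime_iff_not_dvd).mpr
                  (by rw [Nat.odd_iff] at hso; omega)
              exact Nat.Coprime.pow_left 2 h2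
            exact hcop.dvd_of_dvd_mul_left h4'
        have hnew : ∃ X Y Z : ℕ, 0 < X ∧ 0 < Y ∧ 0 < Z ∧ Y ≤ v ∧
            X ^ 4 + 8 * X ^ 2 * Y ^ 2 + 13 * Y ^ 4 = Z ^ 2 := by
          rcases h3 with h3 | h3
          · exact stepA x v s (s + z) hxo hvpos hco' hsum hst h3 h4
          · exact stepA x v (s + z) s hxo hvpos hco'.symm (by omega)
              (by rw [mul_comm]; exact hst) h3 (by tauto)
        obtain ⟨X, Y, Z, hX, hY, hZ, hYv, hEq⟩ := hnew
        exact IH Y (by omega) X Z hX hY hZ hEq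

theorem stmt4 :
    ¬ ∃ x y z : ℤ, 0 < x ∧ 0 < y ∧ 0 < z ∧
      x ^ 4 + 8 * x ^ 2 * y ^ 2 + 13 * y ^ 4 = z ^ 2 := by
  rintro ⟨x, y, z, hx, hy, hz, h⟩
  refine main y.toNat x.toNat z.toNat (by omega) (by omega) (by omega) ?_
  have hx' : (x.toNat : ℤ) = x := Int.toNat_of_nonneg hx.le
  have hy' : (y.toNat : ℤ) = y := Int.toNat_of_nonneg hy.le
  have hz' : (z.toNat : ℤ) = z := Int.toNat_of_nonneg hz.le
  have : ((x.toNat ^ 4 + 8 * x.toNat ^ 2 * y.toNat ^ 2 + 13 * y.toNat ^ 4 : ℕ) : ℤ)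
      = ((z.toNat ^ 2 : ℕ) : ℤ) := by
    push_cast
    rw [hx', hy', hz']
    exact h
  exact_mod_cast this
end

section
/- The diophantine equation x⁴ + 8x²y² + 5y⁴ = z² has no solution in positive integers x, y, z. -/
set_option maxHeartbeats 2000000

-- L1
lemma pow4_of_coprime (a b c : ℤ) (h : IsCoprime a b) (hab : a * b = c ^ 4) (ha : 0 < a) :
    ∃ d : ℤ, 0 < d ∧ a = d ^ 4 := by
  have hu : IsUnit (gcd a b) := by
    rw [← Int.coe_gcd, Int.isUnit_iff]
    left
    exact_mod_cast Int.isCoprime_iff_gcd_eq_one.mp h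
  obtain ⟨d, hd⟩ := exists_associated_pow_of_mul_eq_pow hu hab
  rcases Int.associated_iff.mp hd with h1 | h1
  · refine ⟨|d|, ?_, ?_⟩
    · rcases eq_or_ne d 0 with rfl | hd0
      · simp at h1; omega
      · exact abs_pos.mpr hd0
    · rw [← abs_pow, abs_of_pos (h1 ▸ ha), h1]
  · exfalso; nlinarith [sq_nonneg (d^2), ha]

lemma pow4_inj (a b : ℤ) (ha : 0 < a) (hb : 0 < b) (h : a ^ 4 = b ^ 4) : a = b := by
  by_contra hne
  rcases lt_or_gt_of_ne hne with hlt | hlt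
  · have := pow_lt_pow_left₀ hlt ha.le (n := 4) (by norm_num); omega
  · have := pow_lt_pow_left₀ hlt hb.le (n := 4) (by norm_num); omega

-- L2: coprime split of k * c^4
lemma split_pow4 (k U V c : ℤ) (hk : Prime k) (hkpos : 0 < k) (hU : 0 < U) (hV : 0 < V)
    (hco : IsCoprime U V) (h : U * V = k * c ^ 4) (hc : 0 < c) :
    ∃ p q : ℤ, 0 < p ∧ 0 < q ∧ IsCoprime p q ∧ p * q = c ∧
      ((U = k * p ^ 4 ∧ V = q ^ 4) ∨ (U = p ^ 4 ∧ V = k * q ^ 4)) := by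
  have hkdvd : k ∣ U * V := ⟨c ^ 4, h⟩
  have key : ∀ U V : ℤ, 0 < U → 0 < V → IsCoprime U V → U * V = k * c ^ 4 → k ∣ U →
      ∃ p q : ℤ, 0 < p ∧ 0 < q ∧ IsCoprime p q ∧ p * q = c ∧ U = k * p ^ 4 ∧ V = q ^ 4 := by
    intro U V hU hV hco h hdU
    obtain ⟨m, hm⟩ := hdU
    have hm0 : 0 < m := by nlinarith
    have hmV : m * V = c ^ 4 := by
      have : k * (m * V) = k * c ^ 4 := by rw [← h, hm]; ring
      exact mul_left_cancel₀ hkpos.ne' this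
    have hcomV : IsCoprime m V := hco.of_isCoprime_of_dvd_left ⟨k, by linarith [hm]; ⟩
    obtain ⟨p, hp0, hp⟩ := pow4_of_coprime m V c hcomV hmV hm0
    obtain ⟨q, hq0, hq⟩ := pow4_of_coprime V m c hcomV.symm (by rw [← hmV]; ring) hV
    have hpq : p * q = c := by
      apply pow4_inj _ _ (mul_pos hp0 hq0) hc
      rw [mul_pow, ← hp, ← hq, hmV]
    have hcopq : IsCoprime p q := by
      have : IsCoprime (p ^ 4) (q ^ 4) := hp ▸ hq ▸ hcomV
      exact ((IsCoprime.pow_left_iff (by norm_num)).mp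
        ((IsCoprime.pow_right_iff (by norm_num)).mp this))
    exact ⟨p, q, hp0, hq0, hcopq, hpq, by rw [hm, hp], hq⟩
  rcases hk.dvd_mul.mp hkdvd with hdU | hdV
  · obtain ⟨p, q, h1, h2, h3, h4, h5, h6⟩ := key U V hU hV hco h hdU
    exact ⟨p, q, h1, h2, h3, h4, Or.inl ⟨h5, h6⟩⟩
  · obtain ⟨p, q, h1, h2, h3, h4, h5, h6⟩ := key V U hV hU hco.symm (by rw [← h]; ring) hdV
    exact ⟨q, p, h2, h1, h3.symm, by rw [mul_comm]; exact h4, Or.inr ⟨h6, h5⟩⟩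

-- mod 16 lemmas
lemma D1 : ∀ a k c : ZMod 16, a^4 + 8*a^2*(2*k+1)^2 + 5*(2*k+1)^4 ≠ c^2 := by decide
lemma D2 : ∀ a k p : ZMod 16, a^2 + 16*p^2*(2*k+1)^2 ≠ 4*p^4 + 11*(2*k+1)^4 := by decide
lemma D3 : ∀ k p q : ZMod 16, (2*k+1)^2 + 5*p^4 + q^4 ≠ 8*p^2*q^2 := by decide

lemma coprime_aux (u v : ℤ)
    (H : ∀ q : ℕ, q.Prime → (q:ℤ) ∣ u → (q:ℤ) ∣ v → False) : IsCoprime u v := by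
  rw [Int.isCoprime_iff_gcd_eq_one]
  by_contra hg
  obtain ⟨q, hq, hqd⟩ := Nat.exists_prime_and_dvd hg
  exact H q hq ((Int.natCast_dvd_natCast.mpr hqd).trans (Int.gcd_dvd_left u v))
    ((Int.natCast_dvd_natCast.mpr hqd).trans (Int.gcd_dvd_right u v))

lemma descent (x y z : ℤ) (hx : 0 < x) (hy : 0 < y) (hco : IsCoprime x y)
    (heq : x^4 + 8*x^2*y^2 + 5*y^4 = z^2) :
    ∃ X Y Z : ℤ, 0 < X ∧ 0 < Y ∧ Y < y ∧ X^4 + 8*X^2*Y^2 + 5*Y^4 = Z^2 := by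
  rcases Int.even_or_odd y with hye | hyo
  case inr =>
    -- y odd : mod 16 contradiction
    exfalso
    obtain ⟨k, hk⟩ := hyo
    subst hk
    have h16 : ((x:ZMod 16))^4 + 8*(x:ZMod 16)^2*(2*(k:ZMod 16)+1)^2
        + 5*(2*(k:ZMod 16)+1)^4 = ((z:ZMod 16))^2 := by
      have := congrArg (fun n : ℤ => (n : ZMod 16)) heq
      push_cast at this
      linear_combination this
    exact D1 (x:ZMod 16) (k:ZMod 16) (z:ZMod 16) h16
  case inl =>
  obtain ⟨c, hc⟩ := hye
  subst hc
  have hc0 : 0 < c := by linarith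
  -- x is odd
  have hxodd : Odd x := by
    rcases Int.even_or_odd x with ⟨m, hm⟩ | h
    · exfalso
      have : IsUnit (2:ℤ) := hco.isUnit_of_dvd' ⟨m, by linarith⟩ ⟨c, by linarith⟩
      rw [Int.isUnit_iff] at this
      omega
    · exact h
  have hc4 : 0 < c^4 := by positivity
  have hA : (x^2 + 16*c^2)^2 = |z|^2 + 176*c^4 := by
    rw [sq_abs]; linear_combination heq
  have hAodd : Odd (x^2 + 16*c^2) := by
    have := hxodd.pow (n := 2)
    exact this.add_even ⟨8*c^2, by ring⟩
  have hzodd : Odd |z| := by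
    rcases Int.even_or_odd z with ⟨m, hm⟩ | h
    · exfalso
      have he : Even ((x^2+16*c^2)^2) := by
        rw [hA, hm]; exact ⟨2*m^2 + 88*c^4, by rw [sq_abs]; ring⟩
      have := hAodd.pow (n := 2)
      rw [Int.even_iff, Int.odd_iff] at * <;> omega
    · rcases abs_choice z with h1 | h1 <;> rw [h1]
      · exact h
      · exact h.neg
  have hAgt : |z| < x^2 + 16*c^2 := by
    nlinarith [abs_nonneg z, sq_nonneg (x^2+16*c^2)]
  obtain ⟨u, hu⟩ : Even (x^2 + 16*c^2 - |z|) := hAodd.sub_odd hzodd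
  obtain ⟨v, hv⟩ : Even (x^2 + 16*c^2 + |z|) := hAodd.add_odd hzodd
  have hu0 : 0 < u := by linarith
  have hv0 : 0 < v := by nlinarith [abs_nonneg z]
  have huv : u * v = 44 * c^4 := by
    have h4 : (u + u) * (v + v) = 176*c^4 := by rw [← hu, ← hv]; linear_combination hA
    have : (4:ℤ) * (u*v) = 4 * (44*c^4) := by linear_combination h4
    exact mul_left_cancel₀ (by norm_num) this
  have husum : u + v = x^2 + 16*c^2 := by linarith
  -- u, v coprime
  have hcouv : IsCoprime u v := by
    apply coprime_aux
    intro q hq hqu hqv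
    have hqZ : Prime (q:ℤ) := Nat.prime_iff_prime_int.mp hq
    have hqA : (q:ℤ) ∣ x^2 + 16*c^2 := husum ▸ dvd_add hqu hqv
    have hq2 : q ≠ 2 := by
      rintro rfl
      rw [← Int.not_even_iff_odd, even_iff_two_dvd] at hAodd
      exact hAodd (by exact_mod_cast hqA)
    have hqc : ¬ (q:ℤ) ∣ c := by
      intro hdc
      have hqx : (q:ℤ) ∣ x := by
        apply hqZ.dvd_of_dvd_pow (n := 2)
        have h16c : (q:ℤ) ∣ 16*c^2 := by exact (dvd_pow hdc two_ne_zero).mul_left 16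
        have := hqA.sub h16c
        simpa using this
      exact hqZ.not_unit (hco.isUnit_of_dvd' hqx (dvd_add hdc hdc))
    have hq44 : (q:ℤ) ∣ 44 * c^4 := huv ▸ (hqu.mul_right v)
    rcases hqZ.dvd_mul.mp hq44 with h44 | hc4'
    · -- q divides 44, q odd prime, so q = 11
      have h44' : (q:ℤ) ∣ 4 * 11 := by norm_num at h44 ⊢; exact h44
      rcases hqZ.dvd_mul.mp h44' with h4 | h11
      · have : (q:ℤ) ∣ 2 := by
          rcases hqZ.dvd_mul.mp (show (q:ℤ) ∣ 2*2 by norm_num at h4 ⊢; exact h4) with h|h <;> exact h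
        have hq2' : q = 2 := by
          have := Int.ofNat_dvd.mp (by exact_mod_cast this)
          exact (Nat.prime_dvd_prime_iff_eq hq (by norm_num)).mp this
        exact hq2 hq2'
      · have hq11 : q = 11 := by
          have := Int.ofNat_dvd.mp (by exact_mod_cast h11)
          exact (Nat.prime_dvd_prime_iff_eq hq (by norm_num)).mp this
        subst hq11
        obtain ⟨k, hk⟩ := mul_dvd_mul hqu hqv
        rw [huv] at hk
        have h11k : 4 * c^4 = 11 * k := by
          have : (11:ℤ) * (4*c^4) = 11 * (11*k) := by push_cast at hk; linarith
          exact mul_left_cancel₀ (by norm_num) this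
        have : (11:ℤ) ∣ 4*c^4 := ⟨k, h11k⟩
        rcases (show Prime (11:ℤ) by norm_num).dvd_mul.mp this with h|h
        · norm_num at h
        · exact hqc ((show Prime (11:ℤ) by norm_num).dvd_of_dvd_pow h)
    · exact hqc (hqZ.dvd_of_dvd_pow hc4')
  -- continuation
  have oddpow4 : ∀ a : ℤ, Odd (a^4) → Odd a := by
    intro a ha
    rcases Int.even_or_odd a with h | h
    · exact absurd ha (Int.not_odd_iff_even.mpr (Int.even_pow.mpr ⟨h, by norm_num⟩))
    · exact h
  suffices H : ∀ e f : ℤ, 0 < e → 0 < f → e * f = 44*c^4 → e + f = x^2+16*c^2 →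
      IsCoprime e f → Odd f →
      ∃ X Y Z : ℤ, 0 < X ∧ 0 < Y ∧ Y < c + c ∧ X^4+8*X^2*Y^2+5*Y^4 = Z^2 by
    rcases Int.even_or_odd u with hue | huo
    · have hvodd : Odd v := by
        rw [← husum] at hAodd
        have := hAodd.sub_even hue
        simpa using this
      exact H u v hu0 hv0 huv husum hcouv hvodd
    · exact H v u hv0 hu0 (by rw [mul_comm]; exact huv) (by linarith) hcouv.symm huo
  intro e f he hf hef hsum hcoef hfodd
  obtain ⟨n, hn⟩ := id hfodd
  have h2f : IsCoprime (2:ℤ) f := ⟨-n, 1, by rw [hn]; ring⟩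
  have h4f : IsCoprime (4:ℤ) f := by
    have := h2f.mul_left h2f
    norm_num at this
    exact this
  have h4e : (4:ℤ) ∣ e := h4f.dvd_of_dvd_mul_right ⟨11*c^4, by linarith⟩
  obtain ⟨w, hw⟩ := h4e
  have hw0 : 0 < w := by linarith
  have hwf : w * f = 11 * c^4 := by
    have h4 : (4:ℤ) * (w*f) = 4 * (11*c^4) := by linear_combination hef - f*hw
    exact mul_left_cancel₀ (by norm_num) h4
  have hcowf : IsCoprime w f := hcoef.of_isCoprime_of_dvd_left ⟨4, by linarith⟩
  obtain ⟨p, q, hp0, hq0, hcopq, hpqc, hsplit⟩ :=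
    split_pow4 11 w f c (by norm_num) (by norm_num) hw0 hf hcowf hwf hc0
  rcases hsplit with ⟨hw11, hfq⟩ | ⟨hwp, hf11⟩
  on_goal 2 =>
    -- f = 11 q^4 : mod 16 contradiction
    exfalso
    subst hw; subst hwp; subst hf11
    have hqodd : Odd q := oddpow4 q (Int.odd_mul.mp hfodd).2
    obtain ⟨k, hk⟩ := hqodd
    subst hk; subst hpqc
    have h16 := congrArg (fun n : ℤ => (n : ZMod 16)) hsum
    push_cast at h16
    exact D2 (x:ZMod 16) (k:ZMod 16) (p:ZMod 16) (by linear_combination -h16)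
  subst hw; subst hw11; subst hfq
  have hqodd : Odd q := oddpow4 q hfodd
  have hx2 : x^2 = 44*p^4 - 16*p^2*q^2 + q^4 := by
    rw [← hpqc] at hsum
    linear_combination -hsum
  have hp4 : 0 < p^4 := by positivity
  have hB : (q^2 - 8*p^2)^2 = x^2 + 20*p^4 := by linear_combination -hx2
  have hBodd : Odd (q^2 - 8*p^2) := (hqodd.pow).sub_even ⟨4*p^2, by ring⟩
  have habsodd : Odd |q^2 - 8*p^2| := by
    rcases abs_choice (q^2 - 8*p^2) with h | h <;> rw [h]
    · exact hBodd
    · exact hBodd.neg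
  have hgt : x < |q^2 - 8*p^2| := by
    nlinarith [sq_abs (q^2 - 8*p^2), abs_nonneg (q^2 - 8*p^2)]
  obtain ⟨U, hU⟩ : Even (|q^2 - 8*p^2| - x) := habsodd.sub_odd hxodd
  obtain ⟨V, hV⟩ : Even (|q^2 - 8*p^2| + x) := habsodd.add_odd hxodd
  have hU0 : 0 < U := by linarith
  have hV0 : 0 < V := by linarith
  have hUV : U * V = 5 * p^4 := by
    have h4 : (U + U) * (V + V) = 20*p^4 := by
      rw [← hU, ← hV]
      linear_combination sq_abs (q^2 - 8*p^2) + hB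
    have h4' : (4:ℤ) * (U*V) = 4 * (5*p^4) := by linear_combination h4
    exact mul_left_cancel₀ (by norm_num) h4'
  have hUsum : U + V = |q^2 - 8*p^2| := by linarith
  have hcoUV : IsCoprime U V := by
    apply coprime_aux
    intro Q hQ hQU hQV
    have hQZ : Prime (Q:ℤ) := Nat.prime_iff_prime_int.mp hQ
    have hQB : (Q:ℤ) ∣ q^2 - 8*p^2 := by
      have h1 : (Q:ℤ) ∣ |q^2 - 8*p^2| := hUsum ▸ dvd_add hQU hQV
      exact (dvd_abs _ _).mp h1
    have hQp : ¬ (Q:ℤ) ∣ p := by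
      intro hdp
      have hQq : (Q:ℤ) ∣ q := by
        apply hQZ.dvd_of_dvd_pow (n := 2)
        have h8 : (Q:ℤ) ∣ 8*p^2 := by
          have := Dvd.dvd.mul_left (hdp.mul_right p) 8
          exact (dvd_pow hdp two_ne_zero).mul_left 8
        have := hQB.add h8
        simpa using this
      exact hQZ.not_unit (hcopq.isUnit_of_dvd' hdp hQq)
    have hQ5 : (Q:ℤ) ∣ 5 * p^4 := hUV ▸ (hQU.mul_right V)
    rcases hQZ.dvd_mul.mp hQ5 with h5 | hp4'
    · have hQ5' : Q = 5 := by
        have := Int.ofNat_dvd.mp (by exact_mod_cast h5)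
        exact (Nat.prime_dvd_prime_iff_eq hQ (by norm_num)).mp this
      subst hQ5'
      obtain ⟨k, hk⟩ := mul_dvd_mul hQU hQV
      rw [hUV] at hk
      have h5k : p^4 = 5 * k := by
        have h5' : (5:ℤ) * (p^4) = 5 * (5*k) := by push_cast at hk; linarith
        exact mul_left_cancel₀ (by norm_num) h5'
      exact hQp ((show Prime (5:ℤ) by norm_num).dvd_of_dvd_pow (⟨k, h5k⟩ : (5:ℤ) ∣ p^4))
    · exact hQp (hQZ.dvd_of_dvd_pow hp4')
  obtain ⟨a, b, ha0, hb0, hcoab, habp, hsplit2⟩ :=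
    split_pow4 5 U V p (by norm_num) (by norm_num) hU0 hV0 hcoUV hUV hp0
  have hap : a ≤ p := by nlinarith
  have hbp : b ≤ p := by nlinarith
  have hpc : p ≤ c := by rw [← hpqc]; nlinarith
  rcases abs_cases (q^2 - 8*p^2) with ⟨hab2, _⟩ | ⟨hab2, _⟩
  · -- |B| = B : descent succeeds
    rw [hab2] at hUsum
    rcases hsplit2 with ⟨hU5, hVb⟩ | ⟨hUa, hV5⟩
    · refine ⟨b, a, q, hb0, ha0, by linarith, ?_⟩
      rw [hU5, hVb, ← habp] at hUsum
      linear_combination hUsum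
    · refine ⟨a, b, q, ha0, hb0, by linarith, ?_⟩
      rw [hUa, hV5, ← habp] at hUsum
      linear_combination hUsum
  · -- |B| = -B : mod 16 contradiction
    exfalso
    rw [hab2] at hUsum
    obtain ⟨k, hk⟩ := hqodd
    subst hk
    have h16 := congrArg (fun n : ℤ => (n : ZMod 16)) hUsum
    rcases hsplit2 with ⟨hU5, hVb⟩ | ⟨hUa, hV5⟩
    · rw [hU5, hVb, ← habp] at h16
      push_cast at h16
      exact D3 (k:ZMod 16) (a:ZMod 16) (b:ZMod 16) (by linear_combination h16)
    · rw [hUa, hV5, ← habp] at h16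
      push_cast at h16
      exact D3 (k:ZMod 16) (b:ZMod 16) (a:ZMod 16) (by linear_combination h16)

lemma noSol : ∀ n : ℕ, ∀ x y z : ℤ, y.natAbs ≤ n → 0 < x → 0 < y →
    x^4 + 8*x^2*y^2 + 5*y^4 = z^2 → False := by
  intro n
  induction n with
  | zero =>
    intro x y z hle hx hy _
    omega
  | succ n ih =>
    intro x y z hle hx hy heq
    by_cases hco : IsCoprime x y
    · obtain ⟨X, Y, Z, hX, hY, hYlt, hE⟩ := descent x y z hx hy hco heq
      exact ih X Y Z (by omega) hX hY hE
    · obtain ⟨G, hG⟩ : ∃ G : ℤ, G = (Int.gcd x y : ℤ) := ⟨_, rfl⟩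
      have hg1 : Int.gcd x y ≠ 1 := fun h => hco (Int.isCoprime_iff_gcd_eq_one.mpr h)
      have hg0 : Int.gcd x y ≠ 0 := by
        intro h
        rw [Int.gcd_eq_zero_iff] at h
        omega
      have hgx : G ∣ x := hG ▸ Int.gcd_dvd_left x y
      have hgy : G ∣ y := hG ▸ Int.gcd_dvd_right x y
      have hgpos : (1:ℤ) < G := by rw [hG]; exact_mod_cast (by omega : 1 < Int.gcd x y)
      obtain ⟨x1, hx1⟩ := hgx
      obtain ⟨y1, hy1⟩ := hgy
      have hx10 : 0 < x1 := by nlinarith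
      have hy10 : 0 < y1 := by nlinarith
      have hz : G^2 ∣ z := by
        have h4 : (G^2)^2 ∣ z^2 :=
          ⟨x1^4+8*x1^2*y1^2+5*y1^4, by rw [← heq, hx1, hy1]; ring⟩
        exact (Int.pow_dvd_pow_iff (by norm_num)).mp h4
      obtain ⟨z1, hz1⟩ := hz
      rw [hx1, hy1, hz1] at heq
      have heq1 : x1^4+8*x1^2*y1^2+5*y1^4 = z1^2 := by
        have h5 : G^4 * (x1^4+8*x1^2*y1^2+5*y1^4) = G^4 * z1^2 := by linear_combination heq
        exact mul_left_cancel₀ (by positivity) h5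
      have hlt : y1 < y := by nlinarith
      exact ih x1 y1 z1 (by omega) hx10 hy10 heq1

theorem stmt5 :
    ¬ ∃ x y z : ℤ, 0 < x ∧ 0 < y ∧ 0 < z ∧
      x ^ 4 + 8 * x ^ 2 * y ^ 2 + 5 * y ^ 4 = z ^ 2 := by
  rintro ⟨x, y, z, hx, hy, hz, heq⟩
  exact noSol y.natAbs x y z le_rfl hx hy heq
end
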